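/- For a, b ∈ ℤ_{≥0}^n with ||a|| = ||b||, one has a ≺ b in the recursive partial order on P_k(n) if and only if the window notation of w_a is lexicographically greater than that of w_b. -/

import Mathlib

/-- Rank of `(x,y)` in the explicit base ordering of `P_k(2)`. -/
def rank2 (x y : ℕ) : ℕ := if y < x then x - y - 1 else y - x

/-- `π·(a_1,…,a_n) = (a_n + 1, a_1, …, a_{n−1})` on lists. -/
def piL (l : List ℕ) : List ℕ := (l.getLast?.getD 0 + 1) :: l.dropLast

/-- The recursive linear order `≺` of the paper on `P_k(n)`, as an inductively
generated relation (base case `n = 2`; for `n ≥ 3`, `P_{k+1}(n)` is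
`π(P_k(n))` with transported order, followed by `{a : a_1 = 0} ≅ P_{k+1}(n−1)`). -/
inductive Prec : List ℕ → List ℕ → Prop where
  | base (x y u v : ℕ) (hs : x + y = u + v) (hr : rank2 x y < rank2 u v) :
      Prec [x, y] [u, v]
  | pi (a b : List ℕ) (h3 : 3 ≤ a.length) (h : Prec a b) : Prec (piL a) (piL b)
  | mixed (x : ℕ) (a b : List ℕ) (hl : a.length = b.length) (h2 : 2 ≤ a.length)
      (hsum : x + 1 + a.sum = b.sum) : Prec ((x + 1) :: a) (0 :: b)
  | zero (a b : List ℕ) (h2 : 2 ≤ a.length) (h : Prec a b) : Prec (0 :: a) (0 :: b)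

/-- The window of `w_a = t_a ∘ g_a⁻¹`: the increasing rearrangement of the
values `i + n·a_i` (1-based, `n = ` length of `a`). -/
def winL (l : List ℕ) : List ℤ :=
  List.insertionSort (· ≤ ·)
    ((List.range l.length).map fun (i : ℕ) => ((i : ℤ) + 1) + (l.length : ℤ) * (l.getD i 0 : ℤ))

lemma keyArith {n i j : ℕ} (hi : i < n) (hj : j < n) {x y : ℤ}
    (h : (i : ℤ) + 1 + n * x = (j : ℤ) + 1 + n * y) : i = j ∧ x = y := by
  have h1 : (i : ℤ) - j = n * (y - x) := by ring_nf; linarith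
  have hij : i = j := by
    rcases lt_trichotomy x y with h2 | h2 | h2
    · have : (1:ℤ) ≤ y - x := by linarith
      have : (n:ℤ) ≤ n * (y - x) := le_mul_of_one_le_right (by positivity) this
      omega
    · subst h2; omega
    · have : (1:ℤ) ≤ x - y := by linarith
      have : (n:ℤ) ≤ n * (x - y) := le_mul_of_one_le_right (by positivity) this
      have : n * (y - x) ≤ -(n:ℤ) := by linarith
      omega
  refine ⟨hij, ?_⟩
  subst hij
  have hn : (0:ℤ) < n := by exact_mod_cast Nat.pos_of_ne_zero (by omega)
  have := mul_left_cancel₀ (ne_of_gt hn) (by linarith : (n:ℤ) * x = n * y)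
  exact this

lemma mem_winL {l : List ℕ} {x : ℤ} :
    x ∈ winL l ↔ ∃ i < l.length, x = (i : ℤ) + 1 + (l.length : ℤ) * (l.getD i 0 : ℤ) := by
  rw [winL, (List.perm_insertionSort _ _).mem_iff, List.mem_map]
  constructor
  · rintro ⟨i, hi, rfl⟩
    exact ⟨i, List.mem_range.mp hi, rfl⟩
  · rintro ⟨i, hi, rfl⟩
    exact ⟨i, List.mem_range.mpr hi, rfl⟩

lemma sorted_winL (l : List ℕ) : (winL l).Pairwise (· < ·) := by
  have hs : (winL l).Pairwise (· ≤ ·) := List.pairwise_insertionSort _ _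
  have hnd : (winL l).Nodup := by
    rw [winL, (List.perm_insertionSort _ _).nodup_iff]
    refine List.Nodup.map_on ?_ List.nodup_range
    intro i hi j hj h
    exact (keyArith (List.mem_range.mp hi) (List.mem_range.mp hj) h).1
  exact (hs.and hnd).imp (fun h => lt_of_le_of_ne h.1 h.2)

lemma length_winL (l : List ℕ) : (winL l).length = l.length := by
  rw [winL, (List.perm_insertionSort _ _).length_eq, List.length_map, List.length_range]


lemma lex_iff : ∀ (u v : List ℤ), u.Pairwise (· < ·) → v.Pairwise (· < ·) →
    u.length = v.length →
    (List.Lex (· < ·) u v ↔ ∃ x ∈ u, x ∉ v ∧ ∀ y ∈ v, y ∉ u → x < y) := by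
  intro u
  induction u with
  | nil =>
    intro v _ _ hl
    have : v = [] := List.eq_nil_of_length_eq_zero hl.symm
    subst this
    simp
  | cons x₀ u' ih =>
    intro v hu hv hl
    rcases v with _ | ⟨y₀, v'⟩
    · simp at hl
    have hu' : u'.Pairwise (· < ·) := hu.of_cons
    have hv' : v'.Pairwise (· < ·) := hv.of_cons
    have hux : ∀ z ∈ u', x₀ < z := fun z hz => List.rel_of_pairwise_cons hu hz
    have hvy : ∀ z ∈ v', y₀ < z := fun z hz => List.rel_of_pairwise_cons hv hz
    have hl' : u'.length = v'.length := by simpa using hl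
    rcases lt_trichotomy x₀ y₀ with hxy | hxy | hxy
    · constructor
      · intro _
        refine ⟨x₀, List.mem_cons_self, ?_, ?_⟩
        · intro hx
          rcases List.mem_cons.mp hx with h | h
          · omega
          · exact absurd (hvy _ h) (by omega)
        · intro y hy _
          rcases List.mem_cons.mp hy with h | h
          · omega
          · exact lt_trans hxy (hvy _ h)
      · intro _; exact List.Lex.rel hxy
    · subst hxy
      have step : (∃ x ∈ x₀ :: u', x ∉ x₀ :: v' ∧ ∀ y ∈ x₀ :: v', y ∉ x₀ :: u' → x < y) ↔
          (∃ x ∈ u', x ∉ v' ∧ ∀ y ∈ v', y ∉ u' → x < y) := by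
        constructor
        · rintro ⟨x, hx, hxv, hmin⟩
          have hxne : x ≠ x₀ := by
            rintro rfl; exact hxv (List.mem_cons_self)
          have hxu' : x ∈ u' := by
            rcases List.mem_cons.mp hx with h | h
            · exact absurd h hxne
            · exact h
          refine ⟨x, hxu', fun h => hxv (List.mem_cons_of_mem _ h), ?_⟩
          intro y hy hyu'
          have hyne : y ≠ x₀ := by
            rintro rfl; exact absurd (hvy _ hy) (lt_irrefl _)
          exact hmin y (List.mem_cons_of_mem _ hy)
            (fun h => by rcases List.mem_cons.mp h with h | h; exact hyne h; exact hyu' h)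
        · rintro ⟨x, hx, hxv, hmin⟩
          have hx0 : x₀ < x := hux _ hx
          refine ⟨x, List.mem_cons_of_mem _ hx, ?_, ?_⟩
          · intro h
            rcases List.mem_cons.mp h with h | h
            · omega
            · exact hxv h
          · intro y hy hyu
            rcases List.mem_cons.mp hy with h | h
            · exact absurd (h ▸ (List.mem_cons_self (a := x₀) (l := u'))) hyu
            · exact hmin y h (fun hh => hyu (List.mem_cons_of_mem _ hh))
      constructor
      · intro h
        have hlex : List.Lex (· < ·) u' v' := by
          cases h with
          | rel h => omega
          | cons h => exact h
        exact step.mpr ((ih v' hu' hv' hl').mp hlex)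
      · intro h
        exact List.Lex.cons ((ih v' hu' hv' hl').mpr (step.mp h))
    · constructor
      · intro h
        cases h with
        | rel h => omega
        | cons h => omega
      · rintro ⟨x, hx, hxv, hmin⟩
        exfalso
        have hx0 : x₀ ≤ x := by
          rcases List.mem_cons.mp hx with h | h
          · omega
          · exact le_of_lt (hux _ h)
        have hy0 : y₀ ∉ x₀ :: u' := by
          intro h
          rcases List.mem_cons.mp h with h | h
          · omega
          · exact absurd (hux _ h) (by omega)
        have := hmin y₀ (List.mem_cons_self) hy0
        omega

def Rr (a b : List ℕ) : Prop :=
  ∃ i < a.length, (b.getD i 0 < a.getD i 0) ∧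
    ∀ j < a.length, a.getD j 0 ≠ b.getD j 0 →
      (i : ℤ) + 1 + (a.length : ℤ) * (b.getD i 0 : ℤ) <
        (j : ℤ) + 1 + (a.length : ℤ) * (a.getD j 0 : ℤ)

lemma mem_winL' {l : List ℕ} {m : ℕ} (hm : l.length = m) {x : ℤ} :
    x ∈ winL l ↔ ∃ i < m, x = (i : ℤ) + 1 + (m : ℤ) * (l.getD i 0 : ℤ) := by
  subst hm; exact mem_winL

lemma lex_iff_Rr {a b : List ℕ} (hl : a.length = b.length) :
    List.Lex (· < ·) (winL b) (winL a) ↔ Rr a b := by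
  have hmb := fun {x : ℤ} => mem_winL' (l := b) hl.symm (x := x)
  have hma := fun {x : ℤ} => mem_winL' (l := a) rfl (x := x)
  rw [lex_iff _ _ (sorted_winL b) (sorted_winL a)
    (by rw [length_winL, length_winL, hl])]
  constructor
  · rintro ⟨x, hxb, hxa, hmin⟩
    obtain ⟨i, hi, rfl⟩ := hmb.mp hxb
    refine ⟨i, hi, ?_, ?_⟩
    · have hne : a.getD i 0 ≠ b.getD i 0 := by
        intro h
        exact hxa (hma.mpr ⟨i, hi, by rw [h]⟩)
      have hia : ((i:ℤ) + 1 + (a.length:ℤ) * (a.getD i 0 : ℤ)) ∈ winL a :=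
        hma.mpr ⟨i, hi, rfl⟩
      have hnb : ((i:ℤ) + 1 + (a.length:ℤ) * (a.getD i 0 : ℤ)) ∉ winL b := by
        intro h
        obtain ⟨t, ht, hteq⟩ := hmb.mp h
        obtain ⟨rfl, heq⟩ := keyArith ht hi hteq.symm
        exact hne (by exact_mod_cast heq.symm)
      have hlt := hmin _ hia hnb
      have hmul : (a.length:ℤ) * (b.getD i 0 : ℤ) < a.length * (a.getD i 0 : ℤ) := by
        linarith
      have hnn : (0:ℤ) ≤ a.length := by positivity
      exact_mod_cast lt_of_mul_lt_mul_left hmul hnn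
    · intro j hj hne
      have hja : ((j:ℤ) + 1 + (a.length:ℤ) * (a.getD j 0 : ℤ)) ∈ winL a :=
        hma.mpr ⟨j, hj, rfl⟩
      have hjb : ((j:ℤ) + 1 + (a.length:ℤ) * (a.getD j 0 : ℤ)) ∉ winL b := by
        intro h
        obtain ⟨t, ht, hteq⟩ := hmb.mp h
        obtain ⟨rfl, heq⟩ := keyArith ht hj hteq.symm
        exact hne (by exact_mod_cast heq.symm)
      exact hmin _ hja hjb
  · rintro ⟨i, hi, hlt, hmin⟩
    refine ⟨(i:ℤ) + 1 + (a.length:ℤ) * (b.getD i 0 : ℤ), ?_, ?_, ?_⟩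
    · exact hmb.mpr ⟨i, hi, rfl⟩
    · intro h
      obtain ⟨t, ht, hteq⟩ := hma.mp h
      obtain ⟨rfl, heq⟩ := keyArith ht hi hteq.symm
      have : a.getD t 0 = b.getD t 0 := by exact_mod_cast heq
      omega
    · intro y hy hyb
      obtain ⟨j, hj, rfl⟩ := hma.mp hy
      have hne : a.getD j 0 ≠ b.getD j 0 := by
        intro h
        exact hyb (hmb.mpr ⟨j, hj, by rw [← h]⟩)
      exact hmin j hj hne

lemma getLast?_getD (l : List ℕ) (h : l ≠ []) : l.getLast?.getD 0 = l.getD (l.length - 1) 0 := by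
  rw [List.getLast?_eq_getElem?]
  rcases l with _|⟨x,t⟩
  · simp at h
  · simp [List.getD_eq_getElem?_getD]

lemma dropLast_getD (l : List ℕ) (j : ℕ) (h : j < l.length - 1) :
    l.dropLast.getD j 0 = l.getD j 0 := by
  rw [List.getD_eq_getElem?_getD, List.getD_eq_getElem?_getD]
  rw [List.getElem?_eq_getElem (by simpa using h), List.getElem?_eq_getElem (by omega)]
  simp [List.getElem_dropLast]

lemma length_piL (l : List ℕ) (h : l ≠ []) : (piL l).length = l.length := by
  simp only [piL, List.length_cons, List.length_dropLast]
  have : l.length ≠ 0 := fun hh => h (List.eq_nil_of_length_eq_zero hh)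
  omega

lemma Prec.lengths {a b : List ℕ} (h : Prec a b) :
    a.length = b.length ∧ 2 ≤ a.length := by
  induction h with
  | base => simp
  | pi a b h3 h ih =>
    have ha : a ≠ [] := by rintro rfl; simp at h3
    have hb : b ≠ [] := by
      rintro rfl
      have := ih.1
      rw [List.length_nil] at this
      omega
    rw [length_piL _ ha, length_piL _ hb]
    exact ⟨ih.1, by omega⟩
  | mixed x a b hl h2 hsum => simp [hl]; omega
  | zero a b h2 h ih => simp [ih.1]; omega

lemma Rr_piL {a b : List ℕ} (hl : a.length = b.length) (h2 : 2 ≤ a.length)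
    (h : Rr a b) : Rr (piL a) (piL b) := by
  have ha : a ≠ [] := by rintro rfl; simp at h2
  have hb : b ≠ [] := by rintro rfl; rw [List.length_nil] at hl; omega
  obtain ⟨i, hi, hlt, hmin⟩ := h
  set n := a.length with hn
  have hlen : (piL a).length = n := length_piL a ha
  have hA0 : (piL a).getD 0 0 = a.getD (n - 1) 0 + 1 := by
    simp only [piL, List.getD_cons_zero]; rw [getLast?_getD a ha]
  have hB0 : (piL b).getD 0 0 = b.getD (n - 1) 0 + 1 := by
    simp only [piL, List.getD_cons_zero]; rw [getLast?_getD b hb, ← hl]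
  have hAs : ∀ j, j < n - 1 → (piL a).getD (j+1) 0 = a.getD j 0 := by
    intro j hj
    simp only [piL, List.getD_cons_succ]; exact dropLast_getD a j hj
  have hBs : ∀ j, j < n - 1 → (piL b).getD (j+1) 0 = b.getD j 0 := by
    intro j hj
    simp only [piL, List.getD_cons_succ]; exact dropLast_getD b j (by omega)
  have hc : ((n-1:ℕ):ℤ) = (n:ℤ) - 1 := by omega
  have hnpos : (0:ℤ) < n := by exact_mod_cast (by omega : 0 < n)
  by_cases hilast : i = n - 1
  · subst hilast
    refine ⟨0, by omega, by rw [hA0, hB0]; omega, ?_⟩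
    intro j hj hne
    rw [hlen] at hj ⊢
    rw [hB0]
    rcases j with _ | j
    · rw [hA0]
      have hmul := mul_lt_mul_of_pos_left
        (show ((b.getD (n-1) 0 : ℤ)+1) < (a.getD (n-1) 0 : ℤ)+1 by exact_mod_cast (by omega)) hnpos
      push_cast
      linarith
    · rw [hAs j (by omega)]
      rw [hAs j (by omega), hBs j (by omega)] at hne
      have hm := hmin j (by omega) hne
      rw [hc] at hm
      push_cast at hm ⊢
      linarith
  · refine ⟨i + 1, by rw [hlen]; omega,
      by rw [hAs i (by omega), hBs i (by omega)]; omega, ?_⟩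
    intro j hj hne
    rw [hlen] at hj ⊢
    rw [hBs i (by omega)]
    rcases j with _ | j
    · rw [hA0]
      rw [hA0, hB0] at hne
      have hm := hmin (n-1) (by omega) (by omega)
      rw [hc] at hm
      push_cast at hm ⊢
      linarith
    · rw [hAs j (by omega)]
      rw [hAs j (by omega), hBs j (by omega)] at hne
      have hm := hmin j (by omega) hne
      push_cast at hm ⊢
      linarith

lemma Rr_base {x y u v : ℕ} (hs : x + y = u + v) (hr : rank2 x y < rank2 u v) :
    Rr [x, y] [u, v] := by
  have hxu : x ≠ u := by
    rintro rfl
    have : y = v := by omega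
    subst this
    exact absurd hr (lt_irrefl _)
  rcases Nat.lt_or_ge x u with hlt | hge
  · have hvx : v < x := by
      unfold rank2 at hr; split_ifs at hr <;> omega
    refine ⟨1, by norm_num, by simp; omega, ?_⟩
    intro j hj hne
    simp only [List.length_cons, List.length_nil] at hj
    interval_cases j <;> simp_all <;> push_cast <;> omega
  · have hxu' : u < x := by omega
    have huy : u ≤ y := by
      unfold rank2 at hr; split_ifs at hr <;> omega
    refine ⟨0, by norm_num, by simpa, ?_⟩
    intro j hj hne
    simp only [List.length_cons, List.length_nil] at hj
    interval_cases j <;> simp_all <;> push_cast <;> omega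

lemma Rr_mixed (x : ℕ) (a b : List ℕ) (hl : a.length = b.length) :
    Rr ((x + 1) :: a) (0 :: b) := by
  refine ⟨0, by simp, by simp, ?_⟩
  intro j hj hne
  simp only [List.getD_cons_zero, Nat.cast_zero, mul_zero, Nat.cast_ofNat]
  rcases j with _ | j
  · simp only [List.getD_cons_zero]
    have : (0:ℤ) < ((x+1)::a).length := by positivity
    push_cast at this ⊢
    nlinarith [Int.ofNat_nonneg x]
  · simp only [List.getD_cons_succ]
    have hp : (0:ℤ) ≤ (((x+1)::a).length : ℤ) * (a.getD j 0 : ℤ) := by positivity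
    have hj' := Int.ofNat_nonneg j
    push_cast
    push_cast at hp
    linarith

lemma Rr_zero {a b : List ℕ} (h : Rr a b) : Rr (0 :: a) (0 :: b) := by
  obtain ⟨i, hi, hlt, hmin⟩ := h
  refine ⟨i + 1, by simp; omega, by simp only [List.getD_cons_succ]; exact hlt, ?_⟩
  intro j hj hne
  simp only [List.length_cons] at hj ⊢
  rcases j with _ | t
  · simp at hne
  · simp only [List.getD_cons_succ] at hne ⊢
    have hm := hmin t (by omega) hne
    set m := a.length with hmn
    have hmn0 : (0:ℤ) ≤ m := by positivity
    rcases le_or_gt (b.getD i 0) (a.getD t 0) with hba | hba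
    · have hba' : (b.getD i 0 : ℤ) ≤ (a.getD t 0 : ℤ) := by exact_mod_cast hba
      push_cast at hm ⊢
      ring_nf at hm ⊢
      nlinarith
    · exfalso
      have h1 : ((a.getD t 0 : ℤ) + 1) ≤ (b.getD i 0 : ℤ) := by exact_mod_cast hba
      have h2 := mul_le_mul_of_nonneg_left h1 hmn0
      have hi' : (0:ℤ) ≤ i := Int.ofNat_nonneg i
      have ht' : (t:ℤ) < m := by exact_mod_cast (by omega : t < m)
      linarith

lemma Prec.rr {a b : List ℕ} (h : Prec a b) : Rr a b := by
  induction h with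
  | base x y u v hs hr => exact Rr_base hs hr
  | pi a b h3 h ih => exact Rr_piL h.lengths.1 h.lengths.2 ih
  | mixed x a b hl h2 hsum => exact Rr_mixed x a b hl
  | zero a b h2 h ih => exact Rr_zero ih

lemma rank2_inj {x y u v : ℕ} (hs : x + y = u + v) (hr : rank2 x y = rank2 u v) :
    x = u ∧ y = v := by
  unfold rank2 at hr; split_ifs at hr <;> omega

lemma piL_concat (l : List ℕ) (x : ℕ) : piL (l ++ [x]) = (x + 1) :: l := by
  simp [piL]

lemma Prec.total : ∀ (N : ℕ) (a b : List ℕ), a.sum + a.length ≤ N →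
    a.length = b.length → a.sum = b.sum → 2 ≤ a.length → a ≠ b →
    Prec a b ∨ Prec b a := by
  intro N
  induction N with
  | zero => intro a b hN _ _ h2 _; omega
  | succ N ih =>
    intro a b hN hl hs h2 hab
    rcases Nat.lt_or_ge a.length 3 with h3 | h3
    · -- length 2
      have hlen2 : a.length = 2 := by omega
      obtain ⟨x, y, rfl⟩ := List.length_eq_two.mp hlen2
      obtain ⟨u, v, rfl⟩ := List.length_eq_two.mp (hl ▸ hlen2)
      simp only [List.sum_cons, List.sum_nil] at hs
      have hsum : x + y = u + v := by omega
      simp only [ne_eq, List.cons.injEq, and_true, not_and] at hab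
      rcases lt_trichotomy (rank2 x y) (rank2 u v) with hr | hr | hr
      · exact Or.inl (Prec.base x y u v hsum hr)
      · obtain ⟨rfl, rfl⟩ := rank2_inj hsum hr
        exact absurd rfl (hab rfl)
      · exact Or.inr (Prec.base u v x y hsum.symm hr)
    · -- length ≥ 3
      rcases a with _ | ⟨a₀, a'⟩
      · simp at h2
      rcases b with _ | ⟨b₀, b'⟩
      · simp at hl
      simp only [List.length_cons] at hl h3 hN
      simp only [List.sum_cons] at hs hN
      rcases a₀ with _ | x
      · rcases b₀ with _ | y
        · -- 0, 0
          have hab' : a' ≠ b' := by rintro rfl; exact hab rfl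
          rcases ih a' b' (by simpa using by omega) (by omega) (by omega)
              (by omega) hab' with h | h
          · exact Or.inl (Prec.zero a' b' (by omega) h)
          · exact Or.inr (Prec.zero b' a' (by omega) h)
        · -- 0, y+1
          exact Or.inr (Prec.mixed y b' a' (by omega) (by omega) (by omega))
      · rcases b₀ with _ | y
        · -- x+1, 0
          exact Or.inl (Prec.mixed x a' b' (by omega) (by omega) (by omega))
        · -- x+1, y+1
          have hAB : a' ++ [x] ≠ b' ++ [y] := by
            intro h
            apply hab
            have := congrArg piL h
            rw [piL_concat, piL_concat] at this
            exact this
          have hlA : (a' ++ [x]).length = (b' ++ [y]).length := by simp; omega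
          have hsA : (a' ++ [x]).sum = (b' ++ [y]).sum := by simp; omega
          have hNA : (a' ++ [x]).sum + (a' ++ [x]).length ≤ N := by simp; omega
          rcases ih _ _ hNA hlA hsA (by simp; omega) hAB with h | h
          · left
            have := Prec.pi _ _ (by simp; omega) h
            rwa [piL_concat, piL_concat] at this
          · right
            have := Prec.pi _ _ (by simp; omega) h
            rwa [piL_concat, piL_concat] at this


lemma Rr_asymm {a b : List ℕ} (hl : a.length = b.length)
    (h1 : Rr a b) (h2 : Rr b a) : False := by
  obtain ⟨i, hi, hlt, hmin⟩ := h1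
  obtain ⟨i', hi', hlt', hmin'⟩ := h2
  have hm1 := hmin i' (by omega) (by omega)
  have hm2 := hmin' i (by omega) (by omega)
  have hc : (b.length : ℤ) = (a.length : ℤ) := by rw [hl]
  rw [hc] at hm2
  linarith

/-- for `a, b ∈ ℤ_{≥0}^n` with `‖a‖ = ‖b‖`, `a ≺ b` in the
recursive order iff the window of `w_a` is lexicographically greater than the
window of `w_b`. -/
theorem stmt_12 (a b : List ℕ) (hl : a.length = b.length) (hs : a.sum = b.sum) :
    Prec a b ↔ List.Lex (· < ·) (winL b) (winL a) := by
  constructor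
  · intro h
    exact (lex_iff_Rr hl).mpr h.rr
  · intro h
    have hr := (lex_iff_Rr hl).mp h
    have hab : a ≠ b := by
      rintro rfl
      obtain ⟨i, hi, hlt, -⟩ := hr
      omega
    have h2 : 2 ≤ a.length := by
      obtain ⟨i, hi, -, -⟩ := hr
      rcases a with _ | ⟨p, _ | ⟨q, t⟩⟩
      · simp at hi
      · exfalso
        apply hab
        obtain ⟨p', rfl⟩ : ∃ p', b = [p'] := by
          rcases b with _ | ⟨p', _ | ⟨q', t'⟩⟩ <;> simp_all
        simp only [List.sum_cons, List.sum_nil] at hs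
        have : p = p' := by omega
        rw [this]
      · simp only [List.length_cons]; omega
    rcases Prec.total (a.sum + a.length) a b le_rfl hl hs h2 hab with h' | h'
    · exact h'
    · exact absurd (Rr_asymm hl hr h'.rr) id
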